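/- Define sinc : ℝ → ℝ by sinc(x) = sin(πx)/(πx) for x ≠ 0 and sinc(0) = 1, and define K₁, K₂ : ℝ → ℂ by K₁(x) = exp(e^{-2πi x} - 1) · sinc(x) and K₂(x) = exp(cos(2πx) - 1) · sinc(x). Then (i) |K₁(x)|² = |K₂(x)|² = exp(2cos(2πx) - 2) · sinc(x)² for all x ∈ ℝ, and (ii) there exist x₁, x₂, x₃ ∈ ℝ such that det((K₁(x_i - x_j))_{1≤i,j≤3}) ≠ det((K₂(x_i - x_j))_{1≤i,j≤3}). -/

import Mathlib

/-- The sinc function, `sinc(x) = sin(πx)/(πx)` with `sinc(0) = 1`. -/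
noncomputable def sinc (x : ℝ) : ℝ :=
  if x = 0 then 1 else Real.sin (Real.pi * x) / (Real.pi * x)

/-- `K₁(x) = exp(e^{-2πix} - 1) sinc(x)`. -/
noncomputable def K1 (x : ℝ) : ℂ :=
  Complex.exp (Complex.exp (-2 * (Real.pi : ℂ) * Complex.I * (x : ℂ)) - 1) * (sinc x : ℂ)

/-- `K₂(x) = exp(cos(2πx) - 1) sinc(x)`. -/
noncomputable def K2 (x : ℝ) : ℂ :=
  Complex.exp (((Real.cos (2 * Real.pi * x) : ℝ) : ℂ) - 1) * (sinc x : ℂ)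

open Real Complex in
lemma exp_eval (x : ℝ) :
    Complex.exp (-2 * (Real.pi : ℂ) * Complex.I * (x : ℂ)) =
      ((Real.cos (2 * Real.pi * x) : ℝ) : ℂ) - ((Real.sin (2 * Real.pi * x) : ℝ) : ℂ) * Complex.I := by
  have h : (-2 * (Real.pi : ℂ) * Complex.I * (x : ℂ)) = ((-(2 * Real.pi * x) : ℝ) : ℂ) * Complex.I := by
    push_cast; ring
  rw [h, Complex.exp_mul_I, ← Complex.ofReal_cos, ← Complex.ofReal_sin,
    Real.cos_neg, Real.sin_neg]
  push_cast; ring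

lemma sinc_even (x : ℝ) : sinc (-x) = sinc x := by
  unfold sinc
  rcases eq_or_ne x 0 with h | h
  · simp [h]
  · rw [if_neg (neg_ne_zero.mpr h), if_neg h, mul_neg, Real.sin_neg]
    rw [neg_div_neg_eq]

lemma cos_two_pi_div_three : Real.cos (2 * Real.pi / 3) = -(1/2) := by
  rw [show (2 * Real.pi / 3 : ℝ) = Real.pi - Real.pi / 3 by ring, Real.cos_pi_sub,
    Real.cos_pi_div_three]

lemma sin_two_pi_div_three : Real.sin (2 * Real.pi / 3) = Real.sqrt 3 / 2 := by
  rw [show (2 * Real.pi / 3 : ℝ) = Real.pi - Real.pi / 3 by ring, Real.sin_pi_sub,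
    Real.sin_pi_div_three]

lemma cos_four_pi_div_three : Real.cos (4 * Real.pi / 3) = -(1/2) := by
  rw [show (4 * Real.pi / 3 : ℝ) = 2 * Real.pi - 2 * Real.pi / 3 by ring,
    Real.cos_two_pi_sub, cos_two_pi_div_three]

lemma sin_four_pi_div_three : Real.sin (4 * Real.pi / 3) = -(Real.sqrt 3 / 2) := by
  rw [show (4 * Real.pi / 3 : ℝ) = 2 * Real.pi - 2 * Real.pi / 3 by ring,
    Real.sin_two_pi_sub, sin_two_pi_div_three]

/-- `|K₁|² = |K₂|² = exp(2cos(2πx) - 2) sinc(x)²` everywhere, yet some `3×3`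
determinant `det(Kᵢ(x_i - x_j))` distinguishes `K₁` from `K₂`. -/
theorem stmt_18 :
    (∀ x : ℝ,
      ‖K1 x‖^2 = Real.exp (2 * Real.cos (2 * Real.pi * x) - 2) * (sinc x)^2 ∧
      ‖K2 x‖^2 = Real.exp (2 * Real.cos (2 * Real.pi * x) - 2) * (sinc x)^2) ∧
    ∃ x : Fin 3 → ℝ,
      (Matrix.of fun i j => K1 (x i - x j)).det ≠
      (Matrix.of fun i j => K2 (x i - x j)).det := by
  constructor
  · intro x
    constructor
    · rw [K1, norm_mul, Complex.norm_exp, exp_eval, Complex.norm_real, Real.norm_eq_abs]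
      have hre : (((Real.cos (2 * Real.pi * x) : ℝ) : ℂ)
          - ((Real.sin (2 * Real.pi * x) : ℝ) : ℂ) * Complex.I - 1).re
          = Real.cos (2 * Real.pi * x) - 1 := by
        simp only [Complex.sub_re, Complex.mul_re, Complex.ofReal_re, Complex.ofReal_im,
          Complex.I_re, Complex.I_im, Complex.one_re]
        ring
      rw [hre, mul_pow, sq_abs, sq, ← Real.exp_add]
      ring_nf
    · rw [K2, norm_mul, Complex.norm_exp, Complex.norm_real, Real.norm_eq_abs]
      have hre : (((Real.cos (2 * Real.pi * x) : ℝ) : ℂ) - 1).re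
          = Real.cos (2 * Real.pi * x) - 1 := by
        simp only [Complex.sub_re, Complex.ofReal_re, Complex.one_re]
      rw [hre, mul_pow, sq_abs, sq, ← Real.exp_add]
      ring_nf
  · refine ⟨![0, 1/3, 2/3], fun h => ?_⟩
    rw [Matrix.det_fin_three, Matrix.det_fin_three] at h
    simp only [Matrix.of_apply, Matrix.cons_val', Matrix.cons_val_zero, Matrix.cons_val_one,
      Matrix.head_cons, Matrix.empty_val', Matrix.cons_val_fin_one, Matrix.head_fin_const,
      Matrix.cons_val_two, Matrix.tail_cons] at h
    norm_num at h
    set rc : ℂ := ((Real.sqrt 3 : ℝ) : ℂ) with hrc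
    set w1 : ℂ := Complex.exp (-(3/2) - rc/2 * Complex.I) with hw1
    set w2 : ℂ := Complex.exp (-(3/2) + rc/2 * Complex.I) with hw2
    set v : ℂ := Complex.exp (-(3/2)) with hv
    have hcube : ∀ z : ℂ, Complex.exp z ^ 3 = Complex.exp (3 * z) := by
      intro z
      rw [show ((3:ℂ)) = ((3:ℕ):ℂ) by norm_num, Complex.exp_nat_mul]
    -- values of K1
    have hK1z : K1 0 = 1 := by
      simp [K1, sinc]
    have hK2z : K2 0 = 1 := by
      simp [K2, sinc]
    have hK1a : K1 (1/3) = w1 * ((sinc (1/3) : ℝ) : ℂ) := by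
      rw [K1, exp_eval, show 2 * Real.pi * (1/3 : ℝ) = 2 * Real.pi / 3 by ring,
        cos_two_pi_div_three, sin_two_pi_div_three, hw1, hrc]
      congr 1
      push_cast
      ring_nf
    have hK1b : K1 (-(1/3)) = w2 * ((sinc (1/3) : ℝ) : ℂ) := by
      rw [K1, exp_eval, show 2 * Real.pi * (-(1/3) : ℝ) = -(2 * Real.pi / 3) by ring,
        Real.cos_neg, Real.sin_neg, cos_two_pi_div_three, sin_two_pi_div_three,
        sinc_even, hw2, hrc]
      congr 1
      push_cast
      ring_nf
    have hK1c : K1 (2/3) = w2 * ((sinc (2/3) : ℝ) : ℂ) := by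
      rw [K1, exp_eval, show 2 * Real.pi * (2/3 : ℝ) = 4 * Real.pi / 3 by ring,
        cos_four_pi_div_three, sin_four_pi_div_three, hw2, hrc]
      congr 1
      push_cast
      ring_nf
    have hK1d : K1 (-(2/3)) = w1 * ((sinc (2/3) : ℝ) : ℂ) := by
      rw [K1, exp_eval, show 2 * Real.pi * (-(2/3) : ℝ) = -(4 * Real.pi / 3) by ring,
        Real.cos_neg, Real.sin_neg, cos_four_pi_div_three, sin_four_pi_div_three,
        sinc_even, hw1, hrc]
      congr 1
      push_cast
      ring_nf
    -- values of K2
    have hK2a : K2 (1/3) = v * ((sinc (1/3) : ℝ) : ℂ) := by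
      rw [K2, show 2 * Real.pi * (1/3 : ℝ) = 2 * Real.pi / 3 by ring,
        cos_two_pi_div_three, hv]
      congr 1
      push_cast
      ring_nf
    have hK2b : K2 (-(1/3)) = v * ((sinc (1/3) : ℝ) : ℂ) := by
      rw [K2, show 2 * Real.pi * (-(1/3) : ℝ) = -(2 * Real.pi / 3) by ring,
        Real.cos_neg, cos_two_pi_div_three, sinc_even, hv]
      congr 1
      push_cast
      ring_nf
    have hK2c : K2 (2/3) = v * ((sinc (2/3) : ℝ) : ℂ) := by
      rw [K2, show 2 * Real.pi * (2/3 : ℝ) = 4 * Real.pi / 3 by ring,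
        cos_four_pi_div_three, hv]
      congr 1
      push_cast
      ring_nf
    have hK2d : K2 (-(2/3)) = v * ((sinc (2/3) : ℝ) : ℂ) := by
      rw [K2, show 2 * Real.pi * (-(2/3) : ℝ) = -(4 * Real.pi / 3) by ring,
        Real.cos_neg, cos_four_pi_div_three, sinc_even, hv]
      congr 1
      push_cast
      ring_nf
    rw [hK1z, hK2z, hK1a, hK1b, hK1c, hK1d, hK2a, hK2b, hK2c, hK2d] at h
    -- algebraic identities among the exponentials
    have hvw : w1 * w2 = v * v := by
      rw [hw1, hw2, hv, ← Complex.exp_add, ← Complex.exp_add]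
      congr 1
      ring
    have hv3 : v ^ 3 = Complex.exp (-(9/2)) := by
      rw [hv, hcube]
      norm_num
    have hsum : w1 ^ 3 + w2 ^ 3 =
        2 * v ^ 3 * ((Real.cos (3 * Real.sqrt 3 / 2) : ℝ) : ℂ) := by
      rw [hw1, hw2, hcube, hcube, hv3,
        show (3 : ℂ) * (-(3/2) - rc/2 * Complex.I) = -(9/2) + ((-(3 * Real.sqrt 3 / 2) : ℝ) : ℂ) * Complex.I by rw [hrc]; push_cast; ring,
        show (3 : ℂ) * (-(3/2) + rc/2 * Complex.I) = -(9/2) + (((3 * Real.sqrt 3 / 2) : ℝ) : ℂ) * Complex.I by rw [hrc]; push_cast; ring,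
        Complex.exp_add, Complex.exp_add, Complex.exp_mul_I, Complex.exp_mul_I,
        ← Complex.ofReal_cos, ← Complex.ofReal_cos, ← Complex.ofReal_sin, ← Complex.ofReal_sin,
        Real.cos_neg, Real.sin_neg]
      push_cast
      ring_nf
    -- the key vanishing product
    have key : ((sinc (1/3) : ℝ) : ℂ) ^ 2 * ((sinc (2/3) : ℝ) : ℂ) *
        (2 * v ^ 3 * (((Real.cos (3 * Real.sqrt 3 / 2) : ℝ) : ℂ) - 1)) = 0 := by
      linear_combination h + (2 * ((sinc (1/3) : ℝ) : ℂ) ^ 2 + ((sinc (2/3) : ℝ) : ℂ) ^ 2) * hvw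
        - ((sinc (1/3) : ℝ) : ℂ) ^ 2 * ((sinc (2/3) : ℝ) : ℂ) * hsum
    -- each factor is nonzero
    have hs1 : (0:ℝ) < sinc (1/3) := by
      rw [sinc, if_neg (by norm_num : (1/3 : ℝ) ≠ 0),
        show Real.pi * (1/3 : ℝ) = Real.pi / 3 by ring, Real.sin_pi_div_three]
      positivity
    have hs2 : (0:ℝ) < sinc (2/3) := by
      rw [sinc, if_neg (by norm_num : (2/3 : ℝ) ≠ 0),
        show Real.pi * (2/3 : ℝ) = 2 * Real.pi / 3 by ring, sin_two_pi_div_three]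
      positivity
    have hsqrt : Real.sqrt 3 ^ 2 = 3 := Real.sq_sqrt (by norm_num)
    have hsqrtnn : 0 ≤ Real.sqrt 3 := Real.sqrt_nonneg 3
    have hcosle : Real.cos (3 * Real.sqrt 3 / 2) ≤ 0 := by
      apply Real.cos_nonpos_of_pi_div_two_le_of_le
      · nlinarith [Real.pi_lt_d2]
      · nlinarith [Real.pi_gt_three]
    have hcosne : (((Real.cos (3 * Real.sqrt 3 / 2) : ℝ) : ℂ) - 1) ≠ 0 := by
      rw [sub_ne_zero]
      exact_mod_cast (by linarith : Real.cos (3 * Real.sqrt 3 / 2) ≠ 1)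
    exact (mul_ne_zero
      (mul_ne_zero (pow_ne_zero 2 (Complex.ofReal_ne_zero.mpr hs1.ne'))
        (Complex.ofReal_ne_zero.mpr hs2.ne'))
      (mul_ne_zero (mul_ne_zero two_ne_zero (pow_ne_zero 3 (Complex.exp_ne_zero _))) hcosne)) key
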